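/- There exists a set T ⊆ 𝒱 with |C_j ∩ T| = 1 for every j ∈ {1,…,m} if and only if there exist vertices s_x ∈ V(G) for x ∈ 𝒱 and t_j ∈ V(G) for j ∈ {1,…,m} such that, with Σ = {s_x : x ∈ 𝒱} ∪ {t_j : j ∈ {1,…,m}}, one has cell_G(s_x,Σ) = {v(x), v̄(x)} for every x ∈ 𝒱 and cell_G(t_j,Σ) = Δ(j) for every j ∈ {1,…,m}. -/

import Mathlib

/-- Vertices of the graph `G` built from a Positive 1-in-3-SAT instance: a pair `(x, true)`
is the vertex `v(x)`, `(x, false)` is `v̄(x)`, and `⟨j, x⟩` is the triangle vertex `v(j,x)`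
for `x ∈ C j`. -/
def SatVert (𝒱 : Type*) (m : ℕ) (C : Fin m → Finset 𝒱) : Type _ :=
  (𝒱 × Bool) ⊕ ((j : Fin m) × {x : 𝒱 // x ∈ C j})

/-- The base relation generating the edges of `G`: `v(x)v̄(x)`; the triangle on
`Δ(j) = {v(j,x) : x ∈ C j}`; and `v(j,x)v(x)`. -/
def satRel {𝒱 : Type*} {m : ℕ} {C : Fin m → Finset 𝒱} :
    SatVert 𝒱 m C → SatVert 𝒱 m C → Prop
  | .inl (x, b), .inl (x', b') => x = x' ∧ b ≠ b'
  | .inl (x, b), .inr ⟨_, x'⟩ => b = true ∧ x = (x' : 𝒱)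
  | .inr ⟨_, x⟩, .inl (x', b) => b = true ∧ (x : 𝒱) = x'
  | .inr ⟨j, x⟩, .inr ⟨j', x'⟩ => j = j' ∧ (x : 𝒱) ≠ (x' : 𝒱)

/-- The graph `G` of the reduction (with unit edge-lengths). -/
def satGraph (𝒱 : Type*) (m : ℕ) (C : Fin m → Finset 𝒱) : SimpleGraph (SatVert 𝒱 m C) :=
  SimpleGraph.fromRel satRel

/-- The Voronoi cell of a site `s` among the sites `Σ` in a graph with unit edge-lengths,
using the extended (ℕ∞-valued) shortest-path distance, which is `∞` across components. -/
def graphCell {V : Type*} (G : SimpleGraph V) (Sig : Set V) (s : V) : Set V :=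
  {v | ∀ s' ∈ Sig, G.edist s v ≤ G.edist s' v}

section Helpers
variable {𝒱 : Type*} {m : ℕ} {C : Fin m → Finset 𝒱}

lemma satVert_inl_inj {x x' : 𝒱} {b b' : Bool}
    (h : (Sum.inl (x, b) : SatVert 𝒱 m C) = Sum.inl (x', b')) : x = x' ∧ b = b' := by
  cases h; exact ⟨rfl, rfl⟩

lemma satVert_inr_inj {j j' : Fin m} {y : {x : 𝒱 // x ∈ C j}} {y' : {x : 𝒱 // x ∈ C j'}}
    (h : (Sum.inr ⟨j, y⟩ : SatVert 𝒱 m C) = Sum.inr ⟨j', y'⟩) :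
    j = j' ∧ (y : 𝒱) = (y' : 𝒱) := by
  refine ⟨congrArg (fun p : (j : Fin m) × {x : 𝒱 // x ∈ C j} => p.1) (Sum.inr.inj h),
    congrArg (fun p : (j : Fin m) × {x : 𝒱 // x ∈ C j} => (p.2 : 𝒱)) (Sum.inr.inj h)⟩

lemma satVert_inl_ne_inr {p : 𝒱 × Bool} {q : (j : Fin m) × {x : 𝒱 // x ∈ C j}} :
    (Sum.inl p : SatVert 𝒱 m C) ≠ Sum.inr q := fun h => by cases h

lemma satGraph_adj_inl_inl {x x' : 𝒱} {b b' : Bool} :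
    (satGraph 𝒱 m C).Adj (Sum.inl (x, b)) (Sum.inl (x', b')) ↔ x = x' ∧ b ≠ b' := by
  simp only [satGraph, SimpleGraph.fromRel_adj, satRel, ne_eq, Sum.inl.injEq, Prod.mk.injEq]
  constructor
  · rintro ⟨-, ⟨rfl, h⟩ | ⟨rfl, h⟩⟩
    · exact ⟨rfl, h⟩
    · exact ⟨rfl, fun he => h he.symm⟩
  · rintro ⟨rfl, h⟩
    exact ⟨fun he => by cases he; exact h rfl, Or.inl ⟨rfl, h⟩⟩

lemma satGraph_adj_inl_inr {x : 𝒱} {b : Bool} {j : Fin m} {y : {x : 𝒱 // x ∈ C j}} :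
    (satGraph 𝒱 m C).Adj (Sum.inl (x, b)) (Sum.inr ⟨j, y⟩) ↔ b = true ∧ x = (y : 𝒱) := by
  constructor
  · rintro ⟨-, h | h⟩
    · exact h
    · exact ⟨h.1, h.2.symm⟩
  · rintro ⟨rfl, rfl⟩
    exact ⟨satVert_inl_ne_inr, Or.inl ⟨rfl, rfl⟩⟩

lemma satGraph_adj_inr_inl {x : 𝒱} {b : Bool} {j : Fin m} {y : {x : 𝒱 // x ∈ C j}} :
    (satGraph 𝒱 m C).Adj (Sum.inr ⟨j, y⟩) (Sum.inl (x, b)) ↔ b = true ∧ x = (y : 𝒱) := by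
  exact ⟨fun h => satGraph_adj_inl_inr.mp h.symm, fun h => (satGraph_adj_inl_inr.mpr h).symm⟩

lemma satGraph_adj_inr_inr {j j' : Fin m} {y : {x : 𝒱 // x ∈ C j}} {y' : {x : 𝒱 // x ∈ C j'}} :
    (satGraph 𝒱 m C).Adj (Sum.inr ⟨j, y⟩) (Sum.inr ⟨j', y'⟩) ↔ j = j' ∧ (y : 𝒱) ≠ (y' : 𝒱) := by
  simp only [satGraph, SimpleGraph.fromRel_adj, satRel]
  constructor
  · rintro ⟨-, ⟨rfl, h⟩ | ⟨rfl, h⟩⟩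
    · exact ⟨rfl, h⟩
    · exact ⟨rfl, fun he => h he.symm⟩
  · rintro ⟨rfl, h⟩
    exact ⟨fun he => h (satVert_inr_inj he).2, Or.inl ⟨rfl, h⟩⟩

lemma edist_le_one' {V : Type*} {G : SimpleGraph V} {u v : V} (h : u = v ∨ G.Adj u v) :
    G.edist u v ≤ 1 := by
  rcases h with rfl | h
  · simp
  · exact le_of_eq (SimpleGraph.edist_eq_one_iff_adj.mpr h)

lemma one_le_edist' {V : Type*} {G : SimpleGraph V} {u v : V} (h : u ≠ v) :
    1 ≤ G.edist u v := by
  rw [ENat.one_le_iff_ne_zero, Ne, SimpleGraph.edist_eq_zero_iff]; exact h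

lemma two_le_edist' {V : Type*} {G : SimpleGraph V} {u v : V} (h : u ≠ v) (h2 : ¬ G.Adj u v) :
    2 ≤ G.edist u v := by
  have h1 : 1 < G.edist u v := lt_of_le_of_ne (one_le_edist' h)
    (fun he => h2 (SimpleGraph.edist_eq_one_iff_adj.mp he.symm))
  have : (1 : ℕ∞) + 1 ≤ G.edist u v := (ENat.add_one_le_iff (by simp)).mpr h1
  rw [← one_add_one_eq_two]; exact this

lemma dist_pair_le {x : 𝒱} (c b : Bool) :
    (satGraph 𝒱 m C).edist (Sum.inl (x, c)) (Sum.inl (x, b)) ≤ 1 := by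
  apply edist_le_one'
  by_cases hcb : c = b
  · exact Or.inl (by rw [hcb])
  · exact Or.inr (satGraph_adj_inl_inl.mpr ⟨rfl, hcb⟩)

lemma dist_tri_le {j : Fin m} (y y' : {x : 𝒱 // x ∈ C j}) :
    (satGraph 𝒱 m C).edist (Sum.inr ⟨j, y⟩) (Sum.inr ⟨j, y'⟩) ≤ 1 := by
  apply edist_le_one'
  by_cases hcb : (y : 𝒱) = (y' : 𝒱)
  · exact Or.inl (by rw [Subtype.ext hcb])
  · exact Or.inr (satGraph_adj_inr_inr.mpr ⟨rfl, hcb⟩)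

end Helpers

/-- There is a set `T ⊆ 𝒱` meeting every 3-element clause `C j` in exactly one element iff
there are sites `sx x` (for the pairs `{v(x), v̄(x)}`) and `tj j` (for the triangles `Δ(j)`)
whose Voronoi diagram in `G` consists exactly of the pairs `{v(x), v̄(x)}` and the
triangles `Δ(j)`. -/
theorem one_in_three_sat_iff_inverse_voronoi
    (𝒱 : Type*) [Fintype 𝒱] [DecidableEq 𝒱] (m : ℕ) (C : Fin m → Finset 𝒱)
    (hC : ∀ j, (C j).card = 3) :
    (∃ Tset : Finset 𝒱, ∀ j, ((C j) ∩ Tset).card = 1) ↔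
      (∃ (sx : 𝒱 → SatVert 𝒱 m C) (tj : Fin m → SatVert 𝒱 m C),
        (∀ x : 𝒱,
          graphCell (satGraph 𝒱 m C) (Set.range sx ∪ Set.range tj) (sx x) =
            {Sum.inl (x, true), Sum.inl (x, false)}) ∧
        (∀ j : Fin m,
          graphCell (satGraph 𝒱 m C) (Set.range sx ∪ Set.range tj) (tj j) =
            {a | ∃ x : {x : 𝒱 // x ∈ C j}, a = Sum.inr ⟨j, x⟩})) := by
  classical
  set G := satGraph 𝒱 m C with hGdef
  constructor
  · rintro ⟨T, hT⟩
    choose a ha using fun j => Finset.card_eq_one.mp (hT j)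
    have haCT : ∀ j, a j ∈ C j ∧ a j ∈ T := fun j =>
      Finset.mem_inter.mp ((ha j) ▸ Finset.mem_singleton_self (a j))
    have haU : ∀ j x, x ∈ C j → x ∈ T → x = a j := fun j x hx hxT =>
      Finset.mem_singleton.mp ((ha j) ▸ Finset.mem_inter.mpr ⟨hx, hxT⟩)
    set sx : 𝒱 → SatVert 𝒱 m C :=
      fun x => if x ∈ T then Sum.inl (x, true) else Sum.inl (x, false) with hsxdef
    set tj : Fin m → SatVert 𝒱 m C :=
      fun j => Sum.inr ⟨j, ⟨a j, (haCT j).1⟩⟩ with htjdef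
    have hsxe : ∀ x, ∃ b : Bool, sx x = Sum.inl (x, b) ∧ ((x ∈ T) ↔ b = true) := by
      intro x
      by_cases h : x ∈ T
      · exact ⟨true, if_pos h, by simp [h]⟩
      · exact ⟨false, if_neg h, by simp [h]⟩
    have htje : ∀ j, tj j = Sum.inr ⟨j, ⟨a j, (haCT j).1⟩⟩ := fun j => rfl
    refine ⟨sx, tj, ?_, ?_⟩
    · -- the pair cells
      intro x
      obtain ⟨b, hb, hbT⟩ := hsxe x
      ext w
      simp only [graphCell, Set.mem_setOf_eq, Set.mem_insert_iff, Set.mem_singleton_iff]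
      constructor
      · intro hw
        rcases w with ⟨x', b'⟩ | ⟨j', y⟩
        · have hx' : x' = x := by
            by_contra hne
            obtain ⟨b2, hb2, -⟩ := hsxe x'
            have h1 := hw (sx x') (Or.inl ⟨x', rfl⟩)
            have h2 : G.edist (sx x') (Sum.inl (x', b')) ≤ 1 := by
              rw [hb2]; exact dist_pair_le b2 b'
            have h3 : 2 ≤ G.edist (sx x) (Sum.inl (x', b')) := by
              rw [hb]
              refine two_le_edist' (fun he => hne (satVert_inl_inj he).1.symm) ?_
              rw [satGraph_adj_inl_inl]
              rintro ⟨rfl, -⟩; exact hne rfl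
            exact absurd (h3.trans (h1.trans h2)) (by norm_num)
          subst hx'
          cases b'
          · exact Or.inr rfl
          · exact Or.inl rfl
        · exfalso
          have h1 := hw (tj j') (Or.inr ⟨j', rfl⟩)
          by_cases hxy : x ∈ T ∧ x = (y : 𝒱)
          · obtain ⟨hxT, hxyv⟩ := hxy
            have hxa : x = a j' := haU j' x (hxyv ▸ y.2) hxT
            have htw : tj j' = Sum.inr ⟨j', y⟩ := by
              rw [htje]
              exact congrArg _ (congrArg _ (Subtype.ext (hxa.symm.trans hxyv)))
            rw [htw] at h1
            replace h1 := h1.trans_eq SimpleGraph.edist_self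
            have h0 : G.edist (sx x) (Sum.inr ⟨j', y⟩) = 0 := le_antisymm h1 (zero_le ..)
            replace h0 := SimpleGraph.edist_eq_zero_iff.mp h0
            exact satVert_inl_ne_inr (hb.symm.trans h0)
          · have h2 : G.edist (tj j') (Sum.inr ⟨j', y⟩) ≤ 1 := by
              rw [htje]; exact dist_tri_le _ y
            have h3 : 2 ≤ G.edist (sx x) (Sum.inr ⟨j', y⟩) := by
              rw [hb]
              refine two_le_edist' satVert_inl_ne_inr ?_
              rw [satGraph_adj_inl_inr]
              rintro ⟨hbt, hxyv⟩
              exact hxy ⟨hbT.mpr hbt, hxyv⟩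
            exact absurd (h3.trans (h1.trans h2)) (by norm_num)
      · intro hw
        rintro s' (⟨x', rfl⟩ | ⟨j', rfl⟩)
        · by_cases hxx : x' = x
          · subst hxx; exact le_refl _
          · obtain ⟨b2, hb2, -⟩ := hsxe x'
            obtain rfl | rfl := hw
            all_goals {
              refine le_trans ?_ (one_le_edist' ?_)
              · rw [hb]; exact dist_pair_le b _
              · rw [hb2]
                exact fun he => hxx (satVert_inl_inj he).1 }
        · obtain rfl | rfl := hw
          all_goals {
            refine le_trans ?_ (one_le_edist' ?_)
            · rw [hb]; exact dist_pair_le b _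
            · rw [htje]; exact fun he => satVert_inl_ne_inr he.symm }
    · -- the triangle cells
      intro j
      ext w
      simp only [graphCell, Set.mem_setOf_eq]
      constructor
      · intro hw
        rcases w with ⟨x', b'⟩ | ⟨j', y⟩
        · exfalso
          obtain ⟨b2, hb2, hb2T⟩ := hsxe x'
          have h1 := hw (sx x') (Or.inl ⟨x', rfl⟩)
          by_cases hx' : b' = true ∧ x' = a j
          · obtain ⟨rfl, hx'a⟩ := hx'
            have hx'T : x' ∈ T := by rw [hx'a]; exact (haCT j).2
            have hsxw : sx x' = Sum.inl (x', true) := by rw [hb2, hb2T.mp hx'T]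
            rw [hsxw] at h1
            replace h1 := h1.trans_eq SimpleGraph.edist_self
            have h0 : G.edist (tj j) (Sum.inl (x', true)) = 0 := le_antisymm h1 (zero_le ..)
            replace h0 := SimpleGraph.edist_eq_zero_iff.mp h0
            exact satVert_inl_ne_inr ((htje j).symm.trans h0).symm
          · have h2 : G.edist (sx x') (Sum.inl (x', b')) ≤ 1 := by
              rw [hb2]; exact dist_pair_le b2 b'
            have h3 : 2 ≤ G.edist (tj j) (Sum.inl (x', b')) := by
              rw [htje]
              refine two_le_edist' (fun he => satVert_inl_ne_inr he.symm) ?_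
              rw [satGraph_adj_inr_inl]
              rintro ⟨hbt, hxa⟩
              exact hx' ⟨hbt, hxa⟩
            exact absurd (h3.trans (h1.trans h2)) (by norm_num)
        · by_cases hjj : j' = j
          · subst hjj; exact ⟨y, rfl⟩
          · exfalso
            have h1 := hw (tj j') (Or.inr ⟨j', rfl⟩)
            have h2 : G.edist (tj j') (Sum.inr ⟨j', y⟩) ≤ 1 := by
              rw [htje]; exact dist_tri_le _ y
            have h3 : 2 ≤ G.edist (tj j) (Sum.inr ⟨j', y⟩) := by
              rw [htje]
              refine two_le_edist' (fun he => hjj (satVert_inr_inj he).1.symm) ?_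
              rw [satGraph_adj_inr_inr]
              rintro ⟨h, -⟩; exact hjj h.symm
            exact absurd (h3.trans (h1.trans h2)) (by norm_num)
      · rintro ⟨y, rfl⟩
        rintro s' (⟨x', rfl⟩ | ⟨j', rfl⟩)
        · obtain ⟨b2, hb2, -⟩ := hsxe x'
          refine le_trans ?_ (one_le_edist' ?_)
          · rw [htje]; exact dist_tri_le _ y
          · rw [hb2]; exact satVert_inl_ne_inr
        · by_cases hjj : j' = j
          · subst hjj; exact le_refl _
          · refine le_trans ?_ (one_le_edist' ?_)
            · rw [htje]; exact dist_tri_le _ y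
            · rw [htje]
              exact fun he => hjj (satVert_inr_inj he).1
  · rintro ⟨sx, tj, hcell1, hcell2⟩
    have hsx : ∀ x, sx x = Sum.inl (x, true) ∨ sx x = Sum.inl (x, false) := by
      intro x
      have hmem : sx x ∈ graphCell G (Set.range sx ∪ Set.range tj) (sx x) := by
        intro s' _; simp
      rw [hcell1 x] at hmem
      exact hmem
    have htj0 : ∀ j, ∃ y : {x : 𝒱 // x ∈ C j}, tj j = Sum.inr ⟨j, y⟩ := by
      intro j
      have hmem : tj j ∈ graphCell G (Set.range sx ∪ Set.range tj) (tj j) := by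
        intro s' _; simp
      rw [hcell2 j] at hmem
      exact hmem
    choose y hy using htj0
    refine ⟨Finset.univ.filter (fun x => sx x = Sum.inl (x, true)), fun j => ?_⟩
    rw [Finset.card_eq_one]
    refine ⟨(y j : 𝒱), ?_⟩
    ext z
    simp only [Finset.mem_inter, Finset.mem_filter, Finset.mem_univ, true_and,
      Finset.mem_singleton]
    constructor
    · rintro ⟨hzC, hzT⟩
      set w : SatVert 𝒱 m C := Sum.inr ⟨j, ⟨z, hzC⟩⟩ with hwdef
      have hnot : ¬ (∀ s' ∈ Set.range sx ∪ Set.range tj,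
          G.edist (sx z) w ≤ G.edist s' w) := by
        intro hmem
        have hmem2 : w ∈ graphCell G (Set.range sx ∪ Set.range tj) (sx z) := hmem
        rw [hcell1 z] at hmem2
        rcases hmem2 with h | h <;> exact satVert_inl_ne_inr h.symm
      push_neg at hnot
      obtain ⟨s', hs'mem, hlt⟩ := hnot
      have hle : G.edist (sx z) w ≤ 1 := by
        rw [hzT]
        exact edist_le_one' (Or.inr (satGraph_adj_inl_inr.mpr ⟨rfl, rfl⟩))
      have h0 : G.edist s' w = 0 := ENat.lt_one_iff_eq_zero.mp (lt_of_lt_of_le hlt hle)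
      rw [SimpleGraph.edist_eq_zero_iff] at h0
      rcases hs'mem with ⟨x', rfl⟩ | ⟨j', rfl⟩
      · rcases hsx x' with h | h <;> rw [h] at h0 <;> exact absurd h0 satVert_inl_ne_inr
      · rw [hy j'] at h0
        obtain ⟨rfl, h2⟩ := satVert_inr_inj h0
        exact h2.symm
    · rintro rfl
      refine ⟨(y j).2, ?_⟩
      set w : SatVert 𝒱 m C := Sum.inl ((y j : 𝒱), true) with hwdef
      have hnot : ¬ (∀ s' ∈ Set.range sx ∪ Set.range tj,
          G.edist (tj j) w ≤ G.edist s' w) := by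
        intro hmem
        have hmem2 : w ∈ graphCell G (Set.range sx ∪ Set.range tj) (tj j) := hmem
        rw [hcell2 j] at hmem2
        obtain ⟨yy, hyy⟩ := hmem2
        exact satVert_inl_ne_inr hyy
      push_neg at hnot
      obtain ⟨s', hs'mem, hlt⟩ := hnot
      have hle : G.edist (tj j) w ≤ 1 := by
        rw [hy j]
        exact edist_le_one' (Or.inr (satGraph_adj_inr_inl.mpr ⟨rfl, rfl⟩))
      have h0 : G.edist s' w = 0 := ENat.lt_one_iff_eq_zero.mp (lt_of_lt_of_le hlt hle)
      rw [SimpleGraph.edist_eq_zero_iff] at h0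
      rcases hs'mem with ⟨x', rfl⟩ | ⟨j', rfl⟩
      · rcases hsx x' with h | h <;> rw [h] at h0
        · obtain ⟨h1, -⟩ := satVert_inl_inj h0
          rw [← h1, h, h1]
        · obtain ⟨-, h2⟩ := satVert_inl_inj h0
          exact absurd h2 (by simp)
      · rw [hy j'] at h0
        exact absurd h0.symm satVert_inl_ne_inr
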